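/- Let T, ν, ε, v > 0, s ∈ ℝ, and let η₀ be the unique positive root of g(η) := ε²ν²η² + (ν²v − 4ε²T)η − 4(T+1)v. Then for every real ξ with ξ² > η₀, every complex root λ of the quadratic λ² − (2siξ − (ν/v)ξ²)λ − s²ξ² − (ν/v)siξ³ + ((T+1)/v²)ξ² − ε²ξ⁴/(ε²v²ξ² + v³) = 0 satisfies Re λ < −T/(νv). -/

import Mathlib

open Complex

set_option maxHeartbeats 1000000 in
/-- **Uniform strict bound on dispersion roots in the outer frequency range.**
For `T, ν, ε, v > 0`, `s ∈ ℝ`, and `η₀` the unique positive root of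
`g(η) = ε²ν²η² + (ν²v - 4ε²T)η - 4(T+1)v`, every complex root `λ` of
`λ² - (2siξ - (ν/v)ξ²)λ - s²ξ² - (ν/v)siξ³ + ((T+1)/v²)ξ² - ε²ξ⁴/(ε²v²ξ² + v³) = 0`
with `ξ² > η₀` satisfies `Re λ < -T/(νv)`. -/
theorem stmt6 (T ν ε v s : ℝ)
    (hT : 0 < T) (hν : 0 < ν) (hε : 0 < ε) (hv : 0 < v)
    (g : ℝ → ℝ)
    (hg : ∀ η : ℝ, g η = ε ^ 2 * ν ^ 2 * η ^ 2 + (ν ^ 2 * v - 4 * ε ^ 2 * T) * η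
      - 4 * (T + 1) * v)
    (η₀ : ℝ) (hη₀pos : 0 < η₀) (hη₀root : g η₀ = 0)
    (hη₀uniq : ∀ η : ℝ, 0 < η → g η = 0 → η = η₀) :
    ∀ (ξ : ℝ) (l : ℂ), η₀ < ξ ^ 2 →
      l ^ 2 - (2 * (s : ℂ) * Complex.I * (ξ : ℂ) - ((ν : ℂ) / (v : ℂ)) * (ξ : ℂ) ^ 2) * l
          - (s : ℂ) ^ 2 * (ξ : ℂ) ^ 2 - ((ν : ℂ) / (v : ℂ)) * (s : ℂ) * Complex.I * (ξ : ℂ) ^ 3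
          + (((T : ℂ) + 1) / (v : ℂ) ^ 2) * (ξ : ℂ) ^ 2
          - (ε : ℂ) ^ 2 * (ξ : ℂ) ^ 4 / ((ε : ℂ) ^ 2 * (v : ℂ) ^ 2 * (ξ : ℂ) ^ 2 + (v : ℂ) ^ 3)
        = 0 →
      l.re < -T / (ν * v) := by
  intro ξ l hξ heq
  have hvc : (v : ℂ) ≠ 0 := Complex.ofReal_ne_zero.mpr hv.ne'
  have hD : (0:ℝ) < ε^2*v^2*ξ^2 + v^3 := by positivity
  have hDc' : ((ε^2*v^2*ξ^2 + v^3 : ℝ) : ℂ) ≠ 0 := Complex.ofReal_ne_zero.mpr hD.ne'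
  have hDc : (ε:ℂ)^2*(v:ℂ)^2*(ξ:ℂ)^2 + (v:ℂ)^3 ≠ 0 := by push_cast at hDc'; exact hDc'
  set b : ℝ := ν*ξ^2/v with hb
  set c : ℝ := (ξ^2*(T*ε^2*v^2*ξ^2 + (T+1)*v^3))/(v^2*(ε^2*v^2*ξ^2+v^3)) with hc
  -- shift λ → μ = λ - s i ξ
  have key : (l - (s:ℂ)*(ξ:ℂ)*I) * (l - (s:ℂ)*(ξ:ℂ)*I) + (b:ℂ)*(l - (s:ℂ)*(ξ:ℂ)*I) + (c:ℂ) = 0 := by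
    rw [show (l - (s:ℂ)*(ξ:ℂ)*I) * (l - (s:ℂ)*(ξ:ℂ)*I) + (b:ℂ)*(l - (s:ℂ)*(ξ:ℂ)*I) + (c:ℂ)
        = l ^ 2 - (2 * (s : ℂ) * Complex.I * (ξ : ℂ) - ((ν : ℂ) / (v : ℂ)) * (ξ : ℂ) ^ 2) * l
          - (s : ℂ) ^ 2 * (ξ : ℂ) ^ 2 - ((ν : ℂ) / (v : ℂ)) * (s : ℂ) * Complex.I * (ξ : ℂ) ^ 3
          + (((T : ℂ) + 1) / (v : ℂ) ^ 2) * (ξ : ℂ) ^ 2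
          - (ε : ℂ) ^ 2 * (ξ : ℂ) ^ 4 / ((ε : ℂ) ^ 2 * (v : ℂ) ^ 2 * (ξ : ℂ) ^ 2 + (v : ℂ) ^ 3)
        from by
      have hD2 : (ξ:ℂ)^2*(ε:ℂ)^2 + (v:ℂ) ≠ 0 := by
        exact_mod_cast (show (0:ℝ) < ξ^2*ε^2 + v by positivity).ne'
      rw [hb, hc]; push_cast; field_simp
      ring_nf; simp only [Complex.I_sq]; ring_nf]
    exact heq
  have hre := congrArg Complex.re key
  have him := congrArg Complex.im key
  simp only [Complex.add_re, Complex.add_im, Complex.mul_re, Complex.mul_im, Complex.sub_re,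
    Complex.sub_im, Complex.ofReal_re, Complex.ofReal_im, Complex.I_re, Complex.I_im,
    Complex.zero_re, Complex.zero_im, mul_zero, zero_mul, mul_one, sub_zero, zero_sub,
    zero_add, add_zero] at hre him
  -- η₀ ≥ 2T/ν²
  have hη₀ge : 2*T ≤ ν^2*η₀ := by
    by_contra h
    push_neg at h
    have hgr := hη₀root
    rw [hg] at hgr
    nlinarith [mul_pos (pow_pos hε 2) hη₀pos, mul_lt_mul_of_pos_left h (mul_pos (pow_pos hε 2) hη₀pos), mul_lt_mul_of_pos_left h hv]
  have hξ2T : 2*T < ν^2*ξ^2 := lt_of_le_of_lt hη₀ge (by nlinarith [pow_pos hν 2])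
  -- m > -b/2
  have hNb : 0 < 2*(-T/(ν*v)) + b := by
    have h1 : 2*(-T/(ν*v)) + b = (ν^2*ξ^2 - 2*T)/(ν*v) := by
      rw [hb]; field_simp; ring
    rw [h1]
    exact div_pos (by linarith) (by positivity)
  -- q(m) > 0
  have hq : 0 < (-T/(ν*v))^2 + b*(-T/(ν*v)) + c := by
    have hid : ((-T/(ν*v))^2 + b*(-T/(ν*v)) + c) * (ν^2*v^2*(ε^2*v^2*ξ^2+v^3))
        = T^2*ε^2*v^2*ξ^2 + T^2*v^3 + ν^2*v^3*ξ^2 := by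
      rw [hb, hc]; field_simp; ring
    have hP : (0:ℝ) < T^2*ε^2*v^2*ξ^2 + T^2*v^3 + ν^2*v^3*ξ^2 := by positivity
    have hQ : (0:ℝ) < ν^2*v^2*(ε^2*v^2*ξ^2+v^3) := by positivity
    by_contra h
    push_neg at h
    nlinarith [mul_nonpos_of_nonpos_of_nonneg h hQ.le]
  have him2 : (l.im - s*ξ)*(2*l.re + b) = 0 := by linear_combination him
  rcases mul_eq_zero.mp him2 with hY | hX
  · have hre2 : l.re*l.re + b*l.re + c = 0 := by
      have : l.im - s*ξ = 0 := hY
      nlinarith [hre, this]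
    by_contra hX
    push_neg at hX
    nlinarith [mul_nonneg (sub_nonneg.mpr hX) (show (0:ℝ) ≤ l.re + (-T/(ν*v)) + b by linarith)]
  · linarith
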